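/- Fix an integer m > 1. The formal power series B₀(q) = ∑_{n≥0} b(m·n) q^n over ℤ satisfies the functional equation (1−q)² · B₀(q) = (1−q^m) · B₀(q^m). -/

import Mathlib

open PowerSeries

/-- The number of `m`-ary partitions of `n`: partitions of `n` all of whose
parts are powers of `m`. -/
noncomputable def maryPartitions (m n : ℕ) : ℕ :=
  Nat.card {p : n.Partition // ∀ x ∈ p.parts, ∃ k : ℕ, x = m ^ k}

/-- Substitution of `q^m` for `q` in a formal power series: `F(q) ↦ F(q^m)`. -/
noncomputable def substPow (R : Type*) [Semiring R] (m : ℕ) (F : PowerSeries R) : PowerSeries R :=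
  PowerSeries.mk fun n => if m ∣ n then PowerSeries.coeff (R := R) (n / m) F else 0

section Aux

variable (m : ℕ)

/-- Multiset model of m-ary partitions. -/
def MSet (n : ℕ) : Type :=
  {s : Multiset ℕ // (∀ x ∈ s, ∃ k : ℕ, x = m ^ k) ∧ s.sum = n}

def equivA (hm : 0 < m) (n : ℕ) :
    {p : n.Partition // ∀ x ∈ p.parts, ∃ k : ℕ, x = m ^ k} ≃ MSet m n where
  toFun p := ⟨p.1.parts, p.2, p.1.parts_sum⟩
  invFun s := ⟨⟨s.1, fun {i} hi => by
      obtain ⟨k, hk⟩ := s.2.1 i hi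
      subst hk; exact pow_pos hm k, s.2.2⟩, s.2.1⟩
  left_inv p := rfl
  right_inv s := rfl

lemma finite_MSet' (hm : 0 < m) (n : ℕ) : Finite (MSet m n) := by
  exact Finite.of_equiv _ (equivA m (by omega) n)

lemma finite_MSet (hm : 0 < m) (n : ℕ) : Finite (MSet m n) :=
  Finite.of_equiv _ (equivA m hm n)

lemma mary_eq_card (hm : 0 < m) (n : ℕ) : maryPartitions m n = Nat.card (MSet m n) :=
  Nat.card_congr (equivA m hm n)

variable {m}

lemma one_mem_of_not_dvd (hm : 1 < m) {s : Multiset ℕ} (hp : ∀ x ∈ s, ∃ k : ℕ, x = m ^ k)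
    (hnd : ¬ m ∣ s.sum) : (1 : ℕ) ∈ s := by
  by_contra h1
  apply hnd
  apply Multiset.dvd_sum
  intro x hx
  obtain ⟨k, hk⟩ := hp x hx
  subst hk
  rcases Nat.eq_zero_or_pos k with hk0 | hk0
  · subst hk0; rw [pow_zero] at hx; exact absurd hx h1
  · exact dvd_pow_self m (by omega)

/-- Removing a part 1 gives a bijection when `m ∤ n+1`. -/
def equivStep (hm : 1 < m) (n : ℕ) (hnd : ¬ m ∣ (n + 1)) : MSet m (n + 1) ≃ MSet m n where
  toFun s := ⟨s.1.erase 1, fun x hx => s.2.1 x (Multiset.mem_of_mem_erase hx), by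
    have h1 : (1 : ℕ) ∈ s.1 := one_mem_of_not_dvd hm s.2.1 (by rw [s.2.2]; exact hnd)
    have := Multiset.cons_erase h1
    have hsum : (1 + (s.1.erase 1).sum) = n + 1 := by
      rw [← Multiset.sum_cons, this, s.2.2]
    omega⟩
  invFun t := ⟨1 ::ₘ t.1, by
    constructor
    · intro x hx
      rcases Multiset.mem_cons.mp hx with h | h
      · exact ⟨0, by simp [h]⟩
      · exact t.2.1 x h
    · rw [Multiset.sum_cons, t.2.2]; omega⟩
  left_inv s := by
    apply Subtype.ext
    exact Multiset.cons_erase (one_mem_of_not_dvd hm s.2.1 (by rw [s.2.2]; exact hnd))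
  right_inv t := by
    apply Subtype.ext
    exact Multiset.erase_cons_head 1 t.1

/-- The main recurrence bijection. -/
def equivRec (hm : 1 < m) (n : ℕ) :
    MSet m (m * (n + 1)) ≃ (MSet m (m * (n + 1) - 1)) ⊕ (MSet m (n + 1)) where
  toFun s :=
    if h : (1 : ℕ) ∈ s.1 then
      Sum.inl ⟨s.1.erase 1, fun x hx => s.2.1 x (Multiset.mem_of_mem_erase hx), by
        have := Multiset.cons_erase h
        have hsum : (1 + (s.1.erase 1).sum) = m * (n + 1) := by
          rw [← Multiset.sum_cons, this, s.2.2]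
        have : 1 ≤ m * (n + 1) := Nat.one_le_iff_ne_zero.mpr (by positivity)
        omega⟩
    else
      Sum.inr ⟨s.1.map (· / m), by
        have hdvd : ∀ x ∈ s.1, ∃ k : ℕ, x = m ^ (k + 1) := by
          intro x hx
          obtain ⟨k, hk⟩ := s.2.1 x hx
          rcases Nat.eq_zero_or_pos k with hk0 | hk0
          · exfalso; apply h; rw [hk0, pow_zero] at hk; exact hk ▸ hx
          · exact ⟨k - 1, by rw [hk]; congr 1; omega⟩
        constructor
        · intro x hx
          obtain ⟨y, hy, hxy⟩ := Multiset.mem_map.mp hx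
          obtain ⟨k, hk⟩ := hdvd y hy
          exact ⟨k, by rw [← hxy, hk, pow_succ, Nat.mul_div_cancel _ (by omega)]⟩
        · have key : (s.1.map fun x => m * (x / m)).sum = s.1.sum := by
            apply congrArg Multiset.sum
            conv_rhs => rw [← Multiset.map_id s.1]
            apply Multiset.map_congr rfl
            intro x hx
            obtain ⟨k, hk⟩ := hdvd x hx
            simp only [id]
            rw [hk, pow_succ, Nat.mul_div_cancel _ (by omega : 0 < m)]
            ring
          rw [Multiset.sum_map_mul_left] at key
          have hs := s.2.2
          have hmpos : 0 < m := by omega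
          exact Nat.eq_of_mul_eq_mul_left hmpos (key.trans hs)⟩
  invFun t :=
    match t with
    | Sum.inl t => ⟨1 ::ₘ t.1, by
        constructor
        · intro x hx
          rcases Multiset.mem_cons.mp hx with h | h
          · exact ⟨0, by simp [h]⟩
          · exact t.2.1 x h
        · rw [Multiset.sum_cons, t.2.2]
          have : 1 ≤ m * (n + 1) := Nat.one_le_iff_ne_zero.mpr (by positivity)
          omega⟩
    | Sum.inr t => ⟨t.1.map (· * m), by
        constructor
        · intro x hx
          obtain ⟨y, hy, hxy⟩ := Multiset.mem_map.mp hx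
          obtain ⟨k, hk⟩ := t.2.1 y hy
          exact ⟨k + 1, by rw [← hxy, hk, pow_succ]⟩
        · rw [Multiset.sum_map_mul_right, Multiset.map_id', t.2.2, mul_comm]⟩
  left_inv s := by
    by_cases h : (1 : ℕ) ∈ s.1
    · simp only [dif_pos h]
      apply Subtype.ext
      exact Multiset.cons_erase h
    · simp only [dif_neg h]
      apply Subtype.ext
      show (s.1.map (· / m)).map (· * m) = s.1
      rw [Multiset.map_map]
      conv_rhs => rw [← Multiset.map_id s.1]
      apply Multiset.map_congr rfl
      intro x hx
      obtain ⟨k, hk⟩ := s.2.1 x hx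
      have hk1 : x ≠ 1 := fun hx1 => h (hx1 ▸ hx)
      have hkpos : 0 < k := by
        rcases Nat.eq_zero_or_pos k with h0 | h0
        · rw [h0, pow_zero] at hk; exact absurd hk hk1
        · exact h0
      have hdvd : m ∣ x := hk ▸ dvd_pow_self m (by omega)
      simp only [Function.comp_apply, id]
      exact Nat.div_mul_cancel hdvd
  right_inv t := by
    match t with
    | Sum.inl t =>
      simp only
      rw [dif_pos (Multiset.mem_cons_self 1 t.1)]
      congr 1
      apply Subtype.ext
      exact Multiset.erase_cons_head 1 t.1
    | Sum.inr t =>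
      simp only
      have h1 : (1 : ℕ) ∉ t.1.map (· * m) := by
        intro h
        obtain ⟨y, _, hxy⟩ := Multiset.mem_map.mp h
        have hd : m ∣ 1 := ⟨y, by rw [← hxy]; ring⟩
        have := Nat.le_of_dvd one_pos hd
        omega
      rw [dif_neg h1]
      congr 1
      apply Subtype.ext
      show (t.1.map (· * m)).map (· / m) = t.1
      rw [Multiset.map_map]
      conv_rhs => rw [← Multiset.map_id t.1]
      apply Multiset.map_congr rfl
      intro x _
      simp only [Function.comp_apply, id]
      exact Nat.mul_div_cancel x (by omega)

variable (m) in
lemma b_step (hm : 1 < m) (n : ℕ) (hnd : ¬ m ∣ (n + 1)) :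
    maryPartitions m (n + 1) = maryPartitions m n := by
  rw [mary_eq_card m (by omega), mary_eq_card m (by omega)]
  exact Nat.card_congr (equivStep hm n hnd)

variable (m) in
lemma b_const (hm : 1 < m) (k r : ℕ) (hr : r < m) :
    maryPartitions m (m * k + r) = maryPartitions m (m * k) := by
  induction r with
  | zero => rfl
  | succ r ih =>
    rw [show m * k + (r + 1) = (m * k + r) + 1 by omega]
    rw [b_step m hm _ ?_, ih (by omega)]
    intro hdvd
    have hd2 : m ∣ m * k + (r + 1) := by rwa [← Nat.add_assoc]
    have h1 : m ∣ r + 1 := (Nat.dvd_add_right ⟨k, rfl⟩).mp hd2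
    have := Nat.le_of_dvd (by omega) h1
    omega

variable (m) in
lemma b_rec (hm : 1 < m) (n : ℕ) :
    maryPartitions m (m * (n + 1)) =
      maryPartitions m (m * (n + 1) - 1) + maryPartitions m (n + 1) := by
  rw [mary_eq_card m (by omega), mary_eq_card m (by omega), mary_eq_card m (by omega)]
  rw [Nat.card_congr (equivRec hm n)]
  have := finite_MSet m (by omega : 0 < m) (m * (n + 1) - 1)
  have := finite_MSet m (by omega : 0 < m) (n + 1)
  exact Nat.card_sum

variable (m) in
lemma b_zero (hm : 1 < m) : maryPartitions m 0 = 1 := by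
  rw [mary_eq_card m (by omega)]
  rw [Nat.card_eq_one_iff_unique]
  have key : ∀ s : MSet m 0, s.1 = 0 := by
    rintro ⟨s, hs1, hs2⟩
    show s = 0
    by_contra h
    obtain ⟨a, ha⟩ := Multiset.exists_mem_of_ne_zero h
    obtain ⟨k, hk⟩ := hs1 a ha
    have h1 : a ≤ s.sum := Multiset.single_le_sum (fun x _ => Nat.zero_le x) a ha
    have h2 : 0 < a := by rw [hk]; exact pow_pos (by omega) k
    omega
  constructor
  · constructor
    intro s t
    apply Subtype.ext
    rw [key s, key t]
  · exact ⟨⟨0, by simp, rfl⟩⟩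

end Aux

lemma cdiff {m : ℕ} (hm : 1 < m) (k : ℕ) :
    maryPartitions m (m * (k + 1)) = maryPartitions m (m * k) + maryPartitions m (k + 1) := by
  rw [b_rec m hm k]
  congr 1
  have h1 : m * (k + 1) = m * k + m := by ring
  have h2 : m * (k + 1) - 1 = m * k + (m - 1) := by omega
  rw [h2, b_const m hm k (m - 1) (by omega)]

lemma b_eq {m : ℕ} (hm : 1 < m) (n : ℕ) :
    maryPartitions m n = maryPartitions m (m * (n / m)) := by
  conv_lhs => rw [← Nat.div_add_mod n m]
  exact b_const m hm (n / m) (n % m) (Nat.mod_lt _ (by omega))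

lemma key (m : ℕ) (hm : 1 < m) (n : ℕ) :
    (maryPartitions m (m * n) : ℤ)
      - (if 1 ≤ n then (maryPartitions m (m * (n - 1)) : ℤ) else 0)
      - (if 1 ≤ n then (maryPartitions m (m * (n - 1)) : ℤ) else 0)
      + (if 2 ≤ n then (maryPartitions m (m * (n - 2)) : ℤ) else 0)
    = (if m ∣ n then (maryPartitions m (m * (n / m)) : ℤ) else 0)
      - (if m ≤ n then
          (if m ∣ n - m then (maryPartitions m (m * ((n - m) / m)) : ℤ) else 0) else 0) := by
  match n with
  | 0 =>
    have h0 : ¬ m = 0 := by omega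
    simp [h0]
  | 1 =>
    rw [if_neg (by omega : ¬ (2:ℕ) ≤ 1), if_neg (by omega : ¬ m ≤ 1),
      if_neg (show ¬ m ∣ 1 from fun h => by have := Nat.le_of_dvd one_pos h; omega)]
    have h1 : maryPartitions m (m * (0 + 1)) = maryPartitions m (m * 0) + maryPartitions m 1 :=
      cdiff hm 0
    have h2 : maryPartitions m 1 = maryPartitions m (m * (1 / m)) := b_eq hm 1
    have h3 : 1 / m = 0 := Nat.div_eq_of_lt hm
    rw [h3] at h2
    simp only [zero_add] at h1
    push_cast [h1, h2]
    ring
  | (k + 2) =>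
    rw [if_pos (by omega : 2 ≤ k + 2)]
    have e1 : k + 2 - 1 = k + 1 := by omega
    have e2 : k + 2 - 2 = k := by omega
    rw [e1, e2]
    have d1 := cdiff hm (k + 1)
    have d2 := cdiff hm k
    by_cases hd : m ∣ k + 2
    · obtain ⟨q, hq⟩ := hd
      have hq1 : 1 ≤ q := by
        by_contra h
        have hq0 : q = 0 := by omega
        rw [hq0, mul_zero] at hq
        omega
      obtain ⟨r, rfl⟩ : ∃ r, q = r + 1 := ⟨q - 1, by omega⟩
      have hmq : m * (r + 1) = m * r + m := by ring
      have hmk : m ≤ k + 2 := by omega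
      have hdiv : (k + 2) / m = r + 1 := by
        rw [hq, Nat.mul_div_cancel_left _ (by omega : 0 < m)]
      have hsub : k + 2 - m = m * r := by omega
      have hdiv2 : (k + 2 - m) / m = r := by
        rw [hsub, Nat.mul_div_cancel_left _ (by omega : 0 < m)]
      rw [if_pos (show m ∣ k + 2 from ⟨r + 1, hq⟩), if_pos hmk,
        if_pos (show m ∣ k + 2 - m from by rw [hsub]; exact ⟨r, rfl⟩), hdiv, hdiv2]
      have b2 : maryPartitions m (k + 2) = maryPartitions m (m * (r + 1)) := by
        have := b_eq hm (k + 2); rwa [hdiv] at this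
      have b1 : maryPartitions m (k + 1) = maryPartitions m (m * r) := by
        have hk1 : k + 1 = m * r + (m - 1) := by omega
        rw [hk1]
        exact b_const m hm r (m - 1) (by omega)
      have d3 : maryPartitions m (m * (r + 1))
          = maryPartitions m (m * r) + maryPartitions m (r + 1) := cdiff hm r
      rw [show k + 1 + 1 = k + 2 from rfl] at d1
      rw [b2] at d1
      rw [b1] at d2
      omega
    · rw [if_neg hd]
      have hb2 : maryPartitions m (k + 2) = maryPartitions m (m * ((k + 2) / m)) := b_eq hm _
      have hb1 : maryPartitions m (k + 1) = maryPartitions m (m * ((k + 1) / m)) := b_eq hm _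
      have hd12 : (k + 2) / m = (k + 1) / m := by
        rw [show k + 2 = (k + 1) + 1 from rfl]
        exact Nat.succ_div_of_not_dvd hd
      rw [hd12] at hb2
      have hz : (if m ≤ k + 2 then
          (if m ∣ k + 2 - m then (maryPartitions m (m * ((k + 2 - m) / m)) : ℤ) else 0)
          else 0) = 0 := by
        by_cases hle : m ≤ k + 2
        · rw [if_pos hle, if_neg]
          intro h
          apply hd
          have he : k + 2 = (k + 2 - m) + m := by omega
          rw [he]
          exact Nat.dvd_add h dvd_rfl
        · rw [if_neg hle]
      rw [hz]
      rw [show k + 1 + 1 = k + 2 from rfl] at d1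
      rw [hb2] at d1
      rw [hb1] at d2
      omega

theorem B0_functional_equation (m : ℕ) (hm : 1 < m) :
    let B₀ : PowerSeries ℤ := PowerSeries.mk fun n => (maryPartitions m (m * n) : ℤ)
    (1 - X) ^ 2 * B₀ = (1 - X ^ m) * substPow ℤ m B₀ := by
  intro B₀
  have hB : ∀ k, (coeff k) B₀ = (maryPartitions m (m * k) : ℤ) := fun k => coeff_mk k _
  have hS : ∀ k, (coeff k) (substPow ℤ m B₀)
      = if m ∣ k then (maryPartitions m (m * (k / m)) : ℤ) else 0 := by
    intro k
    rw [substPow, coeff_mk]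
    split <;> simp [hB]
  ext n
  have hL : (1 - X : PowerSeries ℤ) ^ 2 * B₀ = B₀ - B₀ * X ^ 1 - B₀ * X ^ 1 + B₀ * X ^ 2 := by
    ring
  have hR : (1 - X ^ m : PowerSeries ℤ) * substPow ℤ m B₀
      = substPow ℤ m B₀ - substPow ℤ m B₀ * X ^ m := by ring
  rw [hL, hR, map_add, map_sub, map_sub, map_sub, coeff_mul_X_pow', coeff_mul_X_pow',
    coeff_mul_X_pow']
  simp only [hB, hS, pow_one]
  exact key m hm n
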